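/- arXiv:0807.1471 — 5 statements merged into one kernel-verified Lean document; each statement's English description precedes it below -/
import Mathlib

section
/- Let F : C → C' be a lax symmetric monoidal functor, A a dualizable object of C with dual DA such that φ : F(A) ⊗ F(DA) → F(A ⊗ DA) and I' → F(I) are isomorphisms. Then for any endomorphism f : A → A, the trace of F(f) : F(A) → F(A) equals the image under F of the trace of f, i.e. trace(F f) = F(trace(f)) as endomorphisms of the unit object I' (using the isomorphism I' ≅ F(I)). -/
open CategoryTheory MonoidalCategory Functor.LaxMonoidal

/-- The trace of `f : A ⟶ A` with respect to a dual pair `(A, B)` with coevaluation `η`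
and evaluation `ε`: the composite `I ⟶ A ⊗ B ⟶ A ⊗ B ⟶ B ⊗ A ⟶ I`. -/
def monTrace {C : Type*} [Category C] [MonoidalCategory C] [SymmetricCategory C]
    {A B : C} (η : 𝟙_ C ⟶ A ⊗ B) (e : B ⊗ A ⟶ 𝟙_ C) (f : A ⟶ A) : 𝟙_ C ⟶ 𝟙_ C :=
  η ≫ (f ▷ B) ≫ (β_ A B).hom ≫ e

/-- For a lax symmetric monoidal functor `F : C ⥤ C'`, a dualizable object `A`
with dual `DA` such that `μ : F A ⊗ F DA ⟶ F (A ⊗ DA)` and `ε_F : I' ⟶ F I` are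
isomorphisms, and any endomorphism `f : A ⟶ A`, the trace of `F.map f` (computed with the
induced dual pair `(F A, F DA)`) equals `F (trace f)` as an endomorphism of `I'`, i.e.
`trace (F f) = ε_F ≫ F.map (trace f) ≫ ε_F⁻¹`. -/
theorem stmt4 {C : Type*} [Category C] [MonoidalCategory C] [SymmetricCategory C]
    {C' : Type*} [Category C'] [MonoidalCategory C'] [SymmetricCategory C']
    (F : C ⥤ C') [F.LaxMonoidal]
    (hsym : ∀ X Y : C,
      μ F X Y ≫ F.map (β_ X Y).hom = (β_ (F.obj X) (F.obj Y)).hom ≫ μ F Y X)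
    (A DA : C) (η : 𝟙_ C ⟶ A ⊗ DA) (e : DA ⊗ A ⟶ 𝟙_ C)
    (triangle₁ : (λ_ A).inv ≫ (η ▷ A) ≫ (α_ A DA A).hom ≫ (A ◁ e) ≫ (ρ_ A).hom = 𝟙 A)
    (triangle₂ : (ρ_ DA).inv ≫ (DA ◁ η) ≫ (α_ DA A DA).inv ≫ (e ▷ DA) ≫ (λ_ DA).hom
      = 𝟙 DA)
    [IsIso (μ F A DA)] [IsIso (ε F)] (f : A ⟶ A) :
    monTrace (ε F ≫ F.map η ≫ inv (μ F A DA)) (μ F DA A ≫ F.map e ≫ inv (ε F))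
        (F.map f) =
      ε F ≫ F.map (monTrace η e f) ≫ inv (ε F) := by
  have h1 : inv (μ F A DA) ≫ (F.map f ▷ F.obj DA) =
      F.map (f ▷ DA) ≫ inv (μ F A DA) := by
    rw [IsIso.inv_comp_eq, ← μ_natural_left_assoc]
    simp
  have h2 : inv (μ F A DA) ≫ (β_ (F.obj A) (F.obj DA)).hom ≫ μ F DA A =
      F.map (β_ A DA).hom := by
    rw [IsIso.inv_comp_eq, ← hsym]
  simp only [monTrace, Category.assoc]
  rw [reassoc_of% h1, reassoc_of% h2]
  simp only [monTrace, F.map_comp, Category.assoc,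
    ← BraidedCategory.braiding_naturality_left_assoc]
end

section
/- The trace function T(A) = Σ_i [a_ii] ∈ R/[R,R] on square matrices over a ring R is universal: for any abelian group G and any function S from square matrices over R to G satisfying S(A+B) = S(A) + S(B) (same-size square matrices) and S(AB) = S(BA) (whenever AB and BA are both square), there is a unique group homomorphism h : R/[R,R] → G such that S = h ∘ T. -/
/-- The additive subgroup of a ring generated by the commutators `r₁r₂ − r₂r₁`. -/
def commutatorSubgroup (R : Type*) [Ring R] : AddSubgroup R :=
  AddSubgroup.closure {x | ∃ a b : R, x = a * b - b * a}

/-- `⟨R⟩ = R/[R,R]`, the quotient of the additive group of `R` by the commutator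
subgroup. -/
abbrev ringShadow (R : Type*) [Ring R] := R ⧸ commutatorSubgroup R

/-- The universal trace function `T(A) = Σᵢ [aᵢᵢ] ∈ ⟨R⟩` on square matrices. -/
def matrixShadowTrace {R : Type*} [Ring R] {n : ℕ} (A : Matrix (Fin n) (Fin n) R) :
    ringShadow R :=
  ∑ i, QuotientAddGroup.mk' (commutatorSubgroup R) (A i i)

/-- The trace function `T(A) = Σᵢ [aᵢᵢ] ∈ R/[R,R]` is the universal trace
function: for any abelian group `G` and any function `S` on square matrices over `R`
(of every size) satisfying `S(A + B) = S(A) + S(B)` and `S(AB) = S(BA)`, there is a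
unique group homomorphism `h : R/[R,R] → G` with `S = h ∘ T`. -/
theorem stmt7 {R : Type*} [Ring R] {G : Type*} [AddCommGroup G]
    (S : ∀ n : ℕ, Matrix (Fin n) (Fin n) R → G)
    (hadd : ∀ (n : ℕ) (A B : Matrix (Fin n) (Fin n) R), S n (A + B) = S n A + S n B)
    (hcomm : ∀ (p q : ℕ) (A : Matrix (Fin p) (Fin q) R) (B : Matrix (Fin q) (Fin p) R),
      S p (A * B) = S q (B * A)) :
    ∃! h : ringShadow R →+ G, ∀ (n : ℕ) (A : Matrix (Fin n) (Fin n) R),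
      S n A = h (matrixShadowTrace A) := by
  -- the AddMonoidHom version of S n
  let Sh : ∀ n : ℕ, Matrix (Fin n) (Fin n) R →+ G := fun n =>
    AddMonoidHom.mk' (S n) (hadd n)
  have hS : ∀ n A, S n A = Sh n A := fun n A => rfl
  -- s r = S 1 [r]
  let s : R →+ G := AddMonoidHom.mk' (fun r => S 1 (Matrix.of fun _ _ => r)) (by
    intro a b
    have : (Matrix.of fun (_ _ : Fin 1) => a + b)
        = (Matrix.of fun _ _ => a) + (Matrix.of fun _ _ => b) := by
      ext i j; simp
    show S 1 _ = S 1 _ + S 1 _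
    rw [this, hadd])
  have hmul : ∀ a b : R, s (a * b) = s (b * a) := by
    intro a b
    have h1 : (Matrix.of fun (_ _ : Fin 1) => a * b)
        = (Matrix.of fun (_ _ : Fin 1) => a) * (Matrix.of fun (_ _ : Fin 1) => b) := by
      ext i j; simp [Matrix.mul_apply]
    have h2 : (Matrix.of fun (_ _ : Fin 1) => b * a)
        = (Matrix.of fun (_ _ : Fin 1) => b) * (Matrix.of fun (_ _ : Fin 1) => a) := by
      ext i j; simp [Matrix.mul_apply]
    show S 1 _ = S 1 _
    rw [h1, h2, hcomm]
  have hker : ∀ x ∈ commutatorSubgroup R, s x = 0 := by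
    intro x hx
    induction hx using AddSubgroup.closure_induction with
    | mem x hx =>
      obtain ⟨a, b, rfl⟩ := hx
      rw [map_sub, hmul, sub_self]
    | zero => exact map_zero s
    | add x y _ _ hx hy => rw [map_add, hx, hy, add_zero]
    | neg x _ hx => rw [map_neg, hx, neg_zero]
  let h : ringShadow R →+ G := QuotientAddGroup.lift (commutatorSubgroup R) s hker
  have hh : ∀ r : R, h (QuotientAddGroup.mk' (commutatorSubgroup R) r) = s r := fun r => rfl
  -- key computation: S n of a standard basis matrix
  have hstd : ∀ (n : ℕ) (i j : Fin n) (a : R),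
      S n (Matrix.single i j a) = if j = i then s a else 0 := by
    intro n i j a
    let P : Matrix (Fin n) (Fin 1) R := Matrix.of fun k _ => if k = i then a else 0
    let Q : Matrix (Fin 1) (Fin n) R := Matrix.of fun _ k => if j = k then 1 else 0
    have hPQ : P * Q = Matrix.single i j a := by
      ext k l
      simp [P, Q, Matrix.mul_apply, Matrix.single]
      split_ifs <;> simp_all
    have hQP : Q * P = Matrix.of fun (_ _ : Fin 1) => if j = i then a else 0 := by
      ext k l
      simp [P, Q, Matrix.mul_apply]
    rw [← hPQ, hcomm, hQP]
    split_ifs with hji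
    · rfl
    · have : (Matrix.of fun (_ _ : Fin 1) => (0 : R)) = (0 : Matrix (Fin 1) (Fin 1) R) := by
        ext i j; simp
      simp only [hji, if_false, this]
      exact map_zero (Sh 1)
  refine ⟨h, ?_, ?_⟩
  · intro n A
    have hA : A = ∑ i, ∑ j, Matrix.single i j (A i j) :=
      Matrix.matrix_eq_sum_single A
    conv_lhs => rw [hS, hA]
    rw [map_sum]
    simp only [map_sum]
    unfold matrixShadowTrace
    rw [map_sum]
    calc ∑ i, ∑ j, Sh n (Matrix.single i j (A i j))
        = ∑ i, ∑ j, if j = i then s (A i j) else 0 := by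
          refine Finset.sum_congr rfl fun i _ => Finset.sum_congr rfl fun j _ => ?_
          rw [← hS, hstd]
      _ = ∑ i, s (A i i) := by
          refine Finset.sum_congr rfl fun i _ => ?_
          simp
      _ = ∑ i, h (QuotientAddGroup.mk' (commutatorSubgroup R) (A i i)) := rfl
  · intro h' hh'
    ext r
    simp only [AddMonoidHom.comp_apply]
    have htr : matrixShadowTrace (Matrix.of fun (_ _ : Fin 1) => r)
        = QuotientAddGroup.mk' (commutatorSubgroup R) r := by
      unfold matrixShadowTrace
      simp
    have := hh' 1 (Matrix.of fun _ _ => r)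
    rw [htr] at this
    rw [← this, hh]
    rfl
end

section
/- In a bicategory, let (X, Y) be a dual pair with evaluation ε : Y ⊙ X → U_B an isomorphism, let Z be another 1-cell, and suppose (X ⊙ Z, V) is a dual pair. Then (Z, V ⊙ X) is a dual pair. -/
open CategoryTheory CategoryTheory.Bicategory

universe w v u

section AuxLemmas
variable {B : Type u} [Bicategory.{w, v} B] {a b c : B}

/-- If the counit of an adjunction `y ⊣ x` is an isomorphism, then whiskering the inverse of
the counit with `x` on the right agrees (up to coherence) with whiskering the unit with `x` on
the left. -/
theorem stmt13_aux_I1 {x : b ⟶ a} {y : a ⟶ b} (adj : Bicategory.Adjunction y x)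
    (hε : IsIso adj.counit) :
    inv adj.counit ▷ x = 𝟙 (𝟙 b ≫ x) ⊗≫ x ◁ adj.unit ⊗≫ 𝟙 ((x ≫ y) ≫ x) := by
  rw [← cancel_mono (adj.counit ▷ x)]
  calc inv adj.counit ▷ x ≫ adj.counit ▷ x = 𝟙 _ := by
        rw [← comp_whiskerRight, IsIso.inv_hom_id, id_whiskerRight]
    _ = 𝟙 _ ⊗≫ Bicategory.rightZigzag adj.unit adj.counit ⊗≫ 𝟙 _ := by
        rw [adj.right_triangle]; bicategory
    _ = (𝟙 (𝟙 b ≫ x) ⊗≫ x ◁ adj.unit ⊗≫ 𝟙 ((x ≫ y) ≫ x)) ≫ adj.counit ▷ x := by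
        dsimp only [Bicategory.rightZigzag]; bicategory

end AuxLemmas

/- A dual pair `(X, Y)` with `X ∈ B(B,A)`, `Y ∈ B(A,B)`, coevaluation `η : U_A → X ⊙ Y` and
evaluation `ε : Y ⊙ X → U_B` is exactly `Bicategory.Adjunction y x` for `x : b ⟶ a`,
`y : a ⟶ b` (`unit : 𝟙 a ⟶ y ≫ x`, `counit : x ≫ y ⟶ 𝟙 b`, triangle identities). -/

/-- Let `(X, Y)` be a dual pair whose evaluation `ε : Y ⊙ X → U_B` is an
isomorphism, let `Z ∈ B(C,B)` be a 1-cell, and suppose `(X ⊙ Z, V)` is a dual pair.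
Then `(Z, V ⊙ X)` is a dual pair. -/
theorem stmt13 {B : Type u} [Bicategory.{w, v} B] {a b c : B}
    {x : b ⟶ a} {y : a ⟶ b} (adj : Bicategory.Adjunction y x)
    (hε : IsIso adj.counit)
    {z : c ⟶ b} {v : a ⟶ c} (adj' : Bicategory.Adjunction v (z ≫ x)) :
    Nonempty (Bicategory.Adjunction (x ≫ v) z) := by
  refine ⟨⟨inv adj.counit ⊗≫ x ◁ adj'.unit ▷ y ⊗≫ x ◁ v ◁ z ◁ adj.counit ⊗≫ 𝟙 ((x ≫ v) ≫ z),
    (α_ z x v).inv ≫ adj'.counit, ?_, ?_⟩⟩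
  · -- left triangle
    calc Bicategory.leftZigzag
          (inv adj.counit ⊗≫ x ◁ adj'.unit ▷ y ⊗≫ x ◁ v ◁ z ◁ adj.counit ⊗≫ 𝟙 ((x ≫ v) ≫ z))
          ((α_ z x v).inv ≫ adj'.counit)
        = 𝟙 _ ⊗≫ (inv adj.counit ▷ x) ▷ v ⊗≫
            x ◁ (adj'.unit ▷ (y ≫ x ≫ v) ⊗≫ (v ≫ z) ◁ (adj.counit ▷ (x ≫ v)) ⊗≫
              v ◁ ((α_ z x v).inv ≫ adj'.counit)) ⊗≫ 𝟙 _ := by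
          dsimp only [Bicategory.leftZigzag]; bicategory
      _ = 𝟙 _ ⊗≫ ((𝟙 (𝟙 b ≫ x) ⊗≫ x ◁ adj.unit ⊗≫ 𝟙 ((x ≫ y) ≫ x)) ▷ v) ⊗≫
            x ◁ (adj'.unit ▷ (y ≫ x ≫ v) ⊗≫ (v ≫ z) ◁ (adj.counit ▷ (x ≫ v)) ⊗≫
              v ◁ ((α_ z x v).inv ≫ adj'.counit)) ⊗≫ 𝟙 _ := by
          rw [stmt13_aux_I1 adj hε]
      _ = 𝟙 _ ⊗≫ x ◁ ((𝟙 a ◁ (adj.unit ▷ v) ≫ adj'.unit ▷ ((y ≫ x) ≫ v)) ⊗≫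
            (v ≫ z) ◁ (adj.counit ▷ (x ≫ v)) ⊗≫
              v ◁ ((α_ z x v).inv ≫ adj'.counit)) ⊗≫ 𝟙 _ := by
          bicategory
      _ = 𝟙 _ ⊗≫ x ◁ ((adj'.unit ▷ (𝟙 a ≫ v) ≫ (v ≫ z ≫ x) ◁ (adj.unit ▷ v)) ⊗≫
            (v ≫ z) ◁ (adj.counit ▷ (x ≫ v)) ⊗≫
              v ◁ ((α_ z x v).inv ≫ adj'.counit)) ⊗≫ 𝟙 _ := by
          rw [whisker_exchange]
      _ = 𝟙 _ ⊗≫ x ◁ (adj'.unit ▷ (𝟙 a ≫ v) ⊗≫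
            (v ≫ z) ◁ (Bicategory.rightZigzag adj.unit adj.counit ▷ v) ⊗≫
              v ◁ ((α_ z x v).inv ≫ adj'.counit)) ⊗≫ 𝟙 _ := by
          dsimp only [Bicategory.rightZigzag]; bicategory
      _ = 𝟙 _ ⊗≫ x ◁ (Bicategory.leftZigzag adj'.unit adj'.counit) ⊗≫ 𝟙 _ := by
          rw [adj.right_triangle]; dsimp only [Bicategory.leftZigzag]; bicategory
      _ = (λ_ (x ≫ v)).hom ≫ (ρ_ (x ≫ v)).inv := by
          rw [adj'.left_triangle]; bicategory
  · -- right triangle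
    calc Bicategory.rightZigzag
          (inv adj.counit ⊗≫ x ◁ adj'.unit ▷ y ⊗≫ x ◁ v ◁ z ◁ adj.counit ⊗≫ 𝟙 ((x ≫ v) ≫ z))
          ((α_ z x v).inv ≫ adj'.counit)
        = 𝟙 _ ⊗≫ z ◁ inv adj.counit ⊗≫ (z ≫ x) ◁ adj'.unit ▷ y ⊗≫
            ((z ≫ x ≫ v) ◁ (z ◁ adj.counit) ≫
              ((α_ z x v).inv ≫ adj'.counit) ▷ (z ≫ 𝟙 b)) ⊗≫ 𝟙 _ := by
          dsimp only [Bicategory.rightZigzag]; bicategory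
      _ = 𝟙 _ ⊗≫ z ◁ inv adj.counit ⊗≫ (z ≫ x) ◁ adj'.unit ▷ y ⊗≫
            ((((α_ z x v).inv ≫ adj'.counit) ▷ (z ≫ x ≫ y)) ≫ 𝟙 c ◁ (z ◁ adj.counit)) ⊗≫ 𝟙 _ := by
          rw [whisker_exchange]
      _ = 𝟙 _ ⊗≫ z ◁ inv adj.counit ⊗≫
            (Bicategory.rightZigzag adj'.unit adj'.counit) ▷ y ⊗≫ z ◁ adj.counit ⊗≫ 𝟙 _ := by
          dsimp only [Bicategory.rightZigzag]; bicategory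
      _ = 𝟙 _ ⊗≫ z ◁ (inv adj.counit ≫ adj.counit) ⊗≫ 𝟙 _ := by
          rw [adj'.right_triangle]; bicategory
      _ = (ρ_ z).hom ≫ (λ_ z).inv := by
          rw [IsIso.inv_hom_id]; bicategory
end

section
/- In a bicategory with shadows, the trace is independent of the choice of dual: if (X, Y) and (X, Y') are both dual pairs for a 1-cell X ∈ B(B,A), and f : Q ⊙ X → X ⊙ P is a 2-cell (with Q ∈ B(A,A), P ∈ B(B,B)), then the trace of f computed with respect to (X,Y) equals the trace computed with respect to (X,Y'), as morphisms ⟨Q⟩ → ⟨P⟩. -/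
open CategoryTheory CategoryTheory.Bicategory

universe w v u

/-- A *shadow* on a bicategory `B`: a chosen 0-cell `pt`, functors
`⟨-⟩ : B(a,a) ⥤ B(pt,pt)` for every 0-cell `a`, and natural isomorphisms
`θ : ⟨f ⊙ g⟩ ≅ ⟨g ⊙ f⟩` compatible with the unit and associativity isomorphisms.
(Here `X ⊙ Y` for `X ∈ B(B,A)`, `Y ∈ B(A,B)` corresponds to `y ≫ x` for 1-cells
`x : b ⟶ a`, `y : a ⟶ b` in Mathlib's conventions.) -/
structure Shadow (B : Type u) [Bicategory.{w, v} B] where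
  /-- the chosen 0-cell `I` -/
  pt : B
  /-- the shadow functors on the endo-hom-categories -/
  sh : ∀ a : B, (a ⟶ a) ⥤ (pt ⟶ pt)
  /-- the cyclicity isomorphisms -/
  θ : ∀ {a b : B} (f : a ⟶ b) (g : b ⟶ a), (sh a).obj (f ≫ g) ≅ (sh b).obj (g ≫ f)
  θ_natural_left : ∀ {a b : B} {f f' : a ⟶ b} (η : f ⟶ f') (g : b ⟶ a),
    (sh a).map (η ▷ g) ≫ (θ f' g).hom = (θ f g).hom ≫ (sh b).map (g ◁ η)
  θ_natural_right : ∀ {a b : B} (f : a ⟶ b) {g g' : b ⟶ a} (η : g ⟶ g'),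
    (sh a).map (f ◁ η) ≫ (θ f g').hom = (θ f g).hom ≫ (sh b).map (η ▷ f)
  /-- compatibility of `θ` with the associativity isomorphisms -/
  θ_hexagon : ∀ {a b c : B} (f : a ⟶ b) (g : b ⟶ c) (h : c ⟶ a),
    (θ (f ≫ g) h).hom ≫ (sh c).map (α_ h f g).inv =
      (sh a).map (α_ f g h).hom ≫ (θ f (g ≫ h)).hom ≫ (sh b).map (α_ g h f).hom ≫
        (θ g (h ≫ f)).hom
  /-- compatibility of `θ` with the unit isomorphisms -/
  θ_unit : ∀ {a : B} (z : a ⟶ a),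
    (θ (𝟙 a) z).hom ≫ (sh a).map (ρ_ z).hom = (sh a).map (λ_ z).hom

variable {B : Type u} [Bicategory.{w, v} B]

/-- The trace of a 2-cell `f : Q ⊙ X → X ⊙ P` (in Mathlib's conventions,
`f : x ≫ q ⟶ p ≫ x` for `x : b ⟶ a` with right dual `y : a ⟶ b`, `q : a ⟶ a`,
`p : b ⟶ b`) with respect to a shadow `S` and the dual pair given by the adjunction
`adj : y ⊣ x`:
`⟨Q⟩ ≅ ⟨Q ⊙ U_A⟩ → ⟨Q ⊙ X ⊙ Y⟩ → ⟨X ⊙ P ⊙ Y⟩ ≅ ⟨Y ⊙ X ⊙ P⟩ → ⟨U_B ⊙ P⟩ ≅ ⟨P⟩`. -/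
def Shadow.trace (S : Shadow B) {a b : B} {x : b ⟶ a} {y : a ⟶ b}
    (adj : Bicategory.Adjunction y x) {q : a ⟶ a} {p : b ⟶ b}
    (f : x ≫ q ⟶ p ≫ x) : ((S.sh a).obj q ⟶ (S.sh b).obj p) :=
  (S.sh a).map ((λ_ q).inv ≫ (adj.unit ▷ q) ≫ (α_ y x q).hom ≫ (y ◁ f)) ≫
    (S.θ y (p ≫ x)).hom ≫
    (S.sh b).map ((α_ p x y).hom ≫ (p ◁ adj.counit) ≫ (ρ_ p).hom)

/-- The canonical comparison 2-cell `y ⟶ y'` between two right duals of `x`. -/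
def mateHom {a b : B} {x : b ⟶ a} {y y' : a ⟶ b}
    (adj : Bicategory.Adjunction y x) (adj' : Bicategory.Adjunction y' x) : y ⟶ y' :=
  (λ_ y).inv ≫ (adj'.unit ▷ y) ≫ (α_ y' x y).hom ≫ (y' ◁ adj.counit) ≫ (ρ_ y').hom

theorem mate_unit {a b : B} {x : b ⟶ a} {y y' : a ⟶ b}
    (adj : Bicategory.Adjunction y x) (adj' : Bicategory.Adjunction y' x) :
    adj.unit ≫ (mateHom adj adj' ▷ x) = adj'.unit := by
  dsimp only [mateHom]
  calc
    _ = 𝟙 (𝟙 a) ⊗≫ (𝟙 a ◁ adj.unit ≫ adj'.unit ▷ (y ≫ x)) ⊗≫ y' ◁ adj.counit ▷ x ⊗≫ 𝟙 _ := by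
      bicategory
    _ = 𝟙 (𝟙 a) ⊗≫ (adj'.unit ▷ 𝟙 a ≫ (y' ≫ x) ◁ adj.unit) ⊗≫ y' ◁ adj.counit ▷ x ⊗≫ 𝟙 _ := by
      rw [whisker_exchange]
    _ = adj'.unit ⊗≫ y' ◁ (rightZigzag adj.unit adj.counit) ⊗≫ 𝟙 _ := by
      dsimp only [rightZigzag]; bicategory
    _ = _ := by rw [adj.right_triangle]; bicategory

theorem mate_counit {a b : B} {x : b ⟶ a} {y y' : a ⟶ b}
    (adj : Bicategory.Adjunction y x) (adj' : Bicategory.Adjunction y' x) :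
    (x ◁ mateHom adj adj') ≫ adj'.counit = adj.counit := by
  dsimp only [mateHom]
  calc
    _ = 𝟙 (x ≫ y) ⊗≫ x ◁ adj'.unit ▷ y ⊗≫
          ((x ≫ y') ◁ adj.counit ≫ adj'.counit ▷ 𝟙 b) ⊗≫ 𝟙 _ := by
      bicategory
    _ = 𝟙 (x ≫ y) ⊗≫ x ◁ adj'.unit ▷ y ⊗≫
          (adj'.counit ▷ (x ≫ y) ≫ 𝟙 b ◁ adj.counit) ⊗≫ 𝟙 _ := by
      rw [whisker_exchange]
    _ = 𝟙 (x ≫ y) ⊗≫ (rightZigzag adj'.unit adj'.counit) ▷ y ⊗≫ adj.counit := by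
      dsimp only [rightZigzag]; bicategory
    _ = _ := by rw [adj'.right_triangle]; bicategory

/-- In a bicategory with shadows, the trace is independent of the choice of
dual: if `(X, Y)` and `(X, Y')` are both dual pairs for `X ∈ B(B,A)` and
`f : Q ⊙ X → X ⊙ P` is a 2-cell, then the trace of `f` computed with `(X, Y)` equals the
trace computed with `(X, Y')`, as morphisms `⟨Q⟩ → ⟨P⟩`. -/
theorem stmt16 (S : Shadow B) {a b : B} {x : b ⟶ a} {y y' : a ⟶ b}
    (adj : Bicategory.Adjunction y x) (adj' : Bicategory.Adjunction y' x)
    {q : a ⟶ a} {p : b ⟶ b} (f : x ≫ q ⟶ p ≫ x) :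
    S.trace adj f = S.trace adj' f := by
  have hA : (λ_ q).inv ≫ (adj'.unit ▷ q) ≫ (α_ y' x q).hom ≫ (y' ◁ f)
      = ((λ_ q).inv ≫ (adj.unit ▷ q) ≫ (α_ y x q).hom ≫ (y ◁ f)) ≫
          (mateHom adj adj' ▷ (p ≫ x)) := by
    calc
      _ = 𝟙 q ⊗≫ (adj.unit ≫ mateHom adj adj' ▷ x) ▷ q ⊗≫ y' ◁ f := by
        rw [mate_unit adj adj']; bicategory
      _ = 𝟙 q ⊗≫ adj.unit ▷ q ⊗≫ (mateHom adj adj' ▷ (x ≫ q) ≫ y' ◁ f) := by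
        bicategory
      _ = 𝟙 q ⊗≫ adj.unit ▷ q ⊗≫ (y ◁ f ≫ mateHom adj adj' ▷ (p ≫ x)) := by
        rw [← whisker_exchange]
      _ = _ := by bicategory
  have hC : ((p ≫ x) ◁ mateHom adj adj') ≫ (α_ p x y').hom ≫ (p ◁ adj'.counit) ≫ (ρ_ p).hom
      = (α_ p x y).hom ≫ (p ◁ adj.counit) ≫ (ρ_ p).hom := by
    calc
      _ = 𝟙 ((p ≫ x) ≫ y) ⊗≫ p ◁ (x ◁ mateHom adj adj' ≫ adj'.counit) ⊗≫ 𝟙 p := by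
        bicategory
      _ = _ := by rw [mate_counit adj adj']; bicategory
  have nat : ∀ {Z : S.pt ⟶ S.pt} (h : (S.sh b).obj ((p ≫ x) ≫ y') ⟶ Z),
      (S.sh a).map (mateHom adj adj' ▷ (p ≫ x)) ≫ (S.θ y' (p ≫ x)).hom ≫ h
        = (S.θ y (p ≫ x)).hom ≫ (S.sh b).map ((p ≫ x) ◁ mateHom adj adj') ≫ h := by
    intro Z h
    rw [← Category.assoc, S.θ_natural_left, Category.assoc]
  dsimp only [Shadow.trace]
  rw [hA, ← hC]
  simp only [Functor.map_comp, Category.assoc]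
  rw [nat]
end

section
/- Multiplicativity of the bicategorical trace: in a bicategory with shadows where the shadow lands in a monoidal hom-category B(I,I), let X and Z be right dualizable 1-cells, f : Q ⊙ X → X a 2-cell and g : Z → Z ⊙ P a 2-cell such that g ⊙ f : Z ⊙ Q ⊙ X → Z ⊙ P ⊙ X is defined. Then tr(g ⊙ f) = tr(g) ∘ tr(f) (composition/product of the corresponding shadow morphisms). -/
open CategoryTheory CategoryTheory.Bicategory

universe w v u

variable {B : Type u} [Bicategory.{w, v} B]

section Aux

variable {a b c : B}
    {x : b ⟶ a} {y : a ⟶ b} (adjX : Bicategory.Adjunction y x)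
    {z : c ⟶ b} {w : b ⟶ c} (adjZ : Bicategory.Adjunction w z)
    {q : a ⟶ a} {p : c ⟶ c}
    (f : x ≫ q ⟶ x) (g : z ⟶ p ≫ z)

/-- the 2-cell moved from `sh a` to `sh b` across `θ y` -/
def aux_eta : 𝟙 b ≫ x ⟶ w ≫ (p ≫ z ≫ x) :=
  (adjZ.unit ▷ x) ≫ (α_ w z x).hom ≫ (w ◁ ((g ▷ x) ≫ (α_ p z x).hom))

/-- the 2-cell moved from `sh c` to `sh b` across `θ w` -/
def aux_zeta (z : c ⟶ b) (p : c ⟶ c) : (p ≫ z ≫ x) ≫ y ⟶ p ≫ z :=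
  (α_ p (z ≫ x) y).hom ≫
    (p ◁ ((α_ z x y).hom ≫ (z ◁ adjX.counit) ≫ (ρ_ z).hom))

theorem auxA :
    ((λ_ q).inv ≫ ((adjX.comp adjZ).unit ▷ q) ≫ (α_ (y ≫ w) (z ≫ x) q).hom ≫
        ((y ≫ w) ◁ ((α_ z x q).hom ≫ (z ◁ f) ≫ (g ▷ x) ≫ (α_ p z x).hom))) ≫
        (α_ y w (p ≫ z ≫ x)).hom =
      ((λ_ q).inv ≫ (adjX.unit ▷ q) ≫ (α_ y x q).hom ≫ (y ◁ (f ≫ (λ_ x).inv))) ≫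
        (y ◁ aux_eta adjZ g) := by
  rw [Bicategory.Adjunction.comp_unit]
  dsimp only [Bicategory.Adjunction.comp_unit, Bicategory.Adjunction.compUnit, aux_eta]
  calc
    _ = 𝟙 _ ⊗≫ adjX.unit ▷ q ⊗≫
          y ◁ (adjZ.unit ▷ (x ≫ q) ≫ (w ≫ z) ◁ f) ⊗≫
          y ◁ w ◁ (g ▷ x) ⊗≫ 𝟙 _ := by
      bicategory
    _ = 𝟙 _ ⊗≫ adjX.unit ▷ q ⊗≫
          y ◁ (𝟙 b ◁ f ≫ adjZ.unit ▷ x) ⊗≫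
          y ◁ w ◁ (g ▷ x) ⊗≫ 𝟙 _ := by
      rw [whisker_exchange]
    _ = _ := by bicategory

theorem auxC :
    (α_ (p ≫ z ≫ x) y w).hom ≫ (α_ p (z ≫ x) (y ≫ w)).hom ≫
        (p ◁ (adjX.comp adjZ).counit) ≫ (ρ_ p).hom =
      (aux_zeta adjX z p ▷ w) ≫ (α_ p z w).hom ≫ (p ◁ adjZ.counit) ≫ (ρ_ p).hom := by
  rw [Bicategory.Adjunction.comp_counit]
  dsimp only [Bicategory.Adjunction.comp_counit, Bicategory.Adjunction.compCounit, aux_zeta]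
  bicategory

theorem auxM :
    (aux_eta adjZ g ▷ y) ≫ (α_ w (p ≫ z ≫ x) y).hom ≫ (w ◁ aux_zeta adjX z p) =
      ((α_ (𝟙 b) x y).hom ≫ ((𝟙 b) ◁ adjX.counit) ≫ (ρ_ (𝟙 b)).hom) ≫
        ((λ_ (𝟙 b)).inv ≫ (adjZ.unit ▷ 𝟙 b) ≫ (α_ w z (𝟙 b)).hom ≫
          (w ◁ ((ρ_ z).hom ≫ g))) := by
  dsimp only [aux_eta, aux_zeta]
  calc
    _ = 𝟙 _ ⊗≫ adjZ.unit ▷ (x ≫ y) ⊗≫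
          w ◁ (g ▷ (x ≫ y) ≫ (p ≫ z) ◁ adjX.counit) ⊗≫ 𝟙 _ := by
      bicategory
    _ = 𝟙 _ ⊗≫ adjZ.unit ▷ (x ≫ y) ⊗≫
          w ◁ (z ◁ adjX.counit ≫ g ▷ 𝟙 b) ⊗≫ 𝟙 _ := by
      rw [← whisker_exchange]
    _ = 𝟙 _ ⊗≫ (adjZ.unit ▷ (x ≫ y) ≫ (w ≫ z) ◁ adjX.counit) ⊗≫
          w ◁ g ▷ 𝟙 b ⊗≫ 𝟙 _ := by
      bicategory
    _ = 𝟙 _ ⊗≫ (𝟙 b ◁ adjX.counit ≫ adjZ.unit ▷ 𝟙 b) ⊗≫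
          w ◁ g ▷ 𝟙 b ⊗≫ 𝟙 _ := by
      rw [← whisker_exchange]
    _ = _ := by bicategory

end Aux

/-- Multiplicativity of the bicategorical trace.  Let `X ∈ B(B,A)` (with
dual `Y`) and `Z ∈ B(C,B)` (with dual `W`) be right dualizable, `f : Q ⊙ X → X` and
`g : Z → Z ⊙ P` 2-cells.  The composite 2-cell
`g ⊙ f : Q ⊙ (X ⊙ Z) → (X ⊙ Z) ⊙ P`, traced using the composite dual pair
`(X ⊙ Z, W ⊙ Y)` (Theorem `Adjunction.comp`), has trace the composite
`tr(g) ∘ tr(f) : ⟨Q⟩ → ⟨U_B⟩ → ⟨P⟩` of the shadow morphisms `tr(f)` and `tr(g)`. -/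
theorem stmt18 (S : Shadow B) {a b c : B}
    {x : b ⟶ a} {y : a ⟶ b} (adjX : Bicategory.Adjunction y x)
    {z : c ⟶ b} {w : b ⟶ c} (adjZ : Bicategory.Adjunction w z)
    {q : a ⟶ a} {p : c ⟶ c}
    (f : x ≫ q ⟶ x) (g : z ⟶ p ≫ z) :
    S.trace (adjX.comp adjZ)
        ((α_ z x q).hom ≫ (z ◁ f) ≫ (g ▷ x) ≫ (α_ p z x).hom) =
      S.trace adjX (f ≫ (λ_ x).inv) ≫ S.trace adjZ ((ρ_ z).hom ≫ g) := by
  have hθ : (S.θ (y ≫ w) (p ≫ z ≫ x)).hom =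
      (S.sh a).map (α_ y w (p ≫ z ≫ x)).hom ≫ (S.θ y (w ≫ p ≫ z ≫ x)).hom ≫
        (S.sh b).map (α_ w (p ≫ z ≫ x) y).hom ≫ (S.θ w ((p ≫ z ≫ x) ≫ y)).hom ≫
        (S.sh c).map (α_ (p ≫ z ≫ x) y w).hom := by
    calc (S.θ (y ≫ w) (p ≫ z ≫ x)).hom
        = ((S.θ (y ≫ w) (p ≫ z ≫ x)).hom ≫
            (S.sh c).map (α_ (p ≫ z ≫ x) y w).inv) ≫
            (S.sh c).map (α_ (p ≫ z ≫ x) y w).hom := by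
          simp [← Functor.map_comp]
      _ = _ := by
          rw [S.θ_hexagon y w (p ≫ z ≫ x)]; simp only [Category.assoc]
  dsimp only [Shadow.trace]
  calc
    _ = (S.sh a).map (((λ_ q).inv ≫ ((adjX.comp adjZ).unit ▷ q) ≫
            (α_ (y ≫ w) (z ≫ x) q).hom ≫
            ((y ≫ w) ◁ ((α_ z x q).hom ≫ (z ◁ f) ≫ (g ▷ x) ≫ (α_ p z x).hom))) ≫
            (α_ y w (p ≫ z ≫ x)).hom) ≫
          (S.θ y (w ≫ p ≫ z ≫ x)).hom ≫
          (S.sh b).map (α_ w (p ≫ z ≫ x) y).hom ≫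
          (S.θ w ((p ≫ z ≫ x) ≫ y)).hom ≫
          (S.sh c).map ((α_ (p ≫ z ≫ x) y w).hom ≫
            ((α_ p (z ≫ x) (y ≫ w)).hom ≫ (p ◁ (adjX.comp adjZ).counit) ≫
              (ρ_ p).hom)) := by
        rw [hθ]; simp only [Functor.map_comp, Category.assoc]
    _ = (S.sh a).map (((λ_ q).inv ≫ (adjX.unit ▷ q) ≫ (α_ y x q).hom ≫
            (y ◁ (f ≫ (λ_ x).inv))) ≫ (y ◁ aux_eta adjZ g)) ≫
          (S.θ y (w ≫ p ≫ z ≫ x)).hom ≫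
          (S.sh b).map (α_ w (p ≫ z ≫ x) y).hom ≫
          (S.θ w ((p ≫ z ≫ x) ≫ y)).hom ≫
          (S.sh c).map ((aux_zeta adjX z p ▷ w) ≫ (α_ p z w).hom ≫
            (p ◁ adjZ.counit) ≫ (ρ_ p).hom) := by
        rw [auxA adjX adjZ f g, auxC adjX adjZ (p := p)]
    _ = (S.sh a).map ((λ_ q).inv ≫ (adjX.unit ▷ q) ≫ (α_ y x q).hom ≫
            (y ◁ (f ≫ (λ_ x).inv))) ≫
          (S.θ y (𝟙 b ≫ x)).hom ≫
          (S.sh b).map ((aux_eta adjZ g ▷ y) ≫ (α_ w (p ≫ z ≫ x) y).hom ≫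
            (w ◁ aux_zeta adjX z p)) ≫
          (S.θ w (p ≫ z)).hom ≫
          (S.sh c).map ((α_ p z w).hom ≫ (p ◁ adjZ.counit) ≫ (ρ_ p).hom) := by
        simp only [Functor.map_comp, Category.assoc]
        rw [reassoc_of% (S.θ_natural_right y (aux_eta adjZ g)),
          ← reassoc_of% (S.θ_natural_right w (aux_zeta adjX z p))]
    _ = _ := by
        rw [auxM adjX adjZ g]
        simp only [Functor.map_comp, Category.assoc]
end
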